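/- For all α ∈ (0,1], β > 0, and γ with 0 ≤ γ < β, the following inequality between exponents holds: 2α(β − γ) / (2α(β − γ) + 1) ≥ (2αβ / (2αβ + 1)) · (1 − γ / (β(α(β − γ) + 1))), with equality if and only if γ = 0. -/

import Mathlib

/-- For `α ∈ (0,1]`, `β > 0`, and `0 ≤ γ < β`,
`2α(β−γ)/(2α(β−γ)+1) ≥ (2αβ/(2αβ+1))·(1 − γ/(β(α(β−γ)+1)))`,
with equality if and only if `γ = 0`. -/
theorem statement17 (α β γ : ℝ) (hα0 : 0 < α) (hα1 : α ≤ 1) (hβ : 0 < β)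
    (hγ0 : 0 ≤ γ) (hγβ : γ < β) :
    (2 * α * β / (2 * α * β + 1)) * (1 - γ / (β * (α * (β - γ) + 1)))
        ≤ 2 * α * (β - γ) / (2 * α * (β - γ) + 1) ∧
      (2 * α * (β - γ) / (2 * α * (β - γ) + 1)
          = (2 * α * β / (2 * α * β + 1)) * (1 - γ / (β * (α * (β - γ) + 1))) ↔ γ = 0) := by
  have hbg : 0 < β - γ := by linarith
  have hA : 0 < 2 * α * (β - γ) + 1 := by positivity
  have hB : 0 < 2 * α * β + 1 := by positivity
  have hC : 0 < β * (α * (β - γ) + 1) := by positivity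
  have key : 2 * α * (β - γ) / (2 * α * (β - γ) + 1)
      - (2 * α * β / (2 * α * β + 1)) * (1 - γ / (β * (α * (β - γ) + 1)))
      = 2 * α ^ 2 * β * γ * (β - γ)
        / ((2 * α * (β - γ) + 1) * (2 * α * β + 1) * (β * (α * (β - γ) + 1))) := by
    field_simp
    ring
  have hQ : 0 ≤ 2 * α ^ 2 * β * γ * (β - γ)
      / ((2 * α * (β - γ) + 1) * (2 * α * β + 1) * (β * (α * (β - γ) + 1))) := by
    positivity
  constructor
  · linarith
  · constructor
    · intro h
      rw [h, sub_self] at key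
      field_simp at key
      have h2' : 2 * α ^ 2 * β * γ * (β - γ) = 0 := by linear_combination -β * key
      rcases mul_eq_zero.mp h2' with h2 | h2
      · rcases mul_eq_zero.mp h2 with h3 | h3
        · exfalso
          have : (0:ℝ) < 2 * α ^ 2 * β := by positivity
          linarith
        · exact h3
      · exfalso; linarith
    · intro h
      subst h
      simp
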